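/- Let G be a finite group with trivial center and let a ∈ G. Then a ∈ A_G(a), the set A_G(a) is contained in the center of the centralizer C_G(a) of a in G, and the order of the element a divides the cardinality of A_G(a). -/

import Mathlib

/-- A subrack of a group `G` is a subset closed under conjugation from within. -/
def IsSubrack {G : Type*} [Group G] (S : Set G) : Prop :=
  ∀ a ∈ S, ∀ b ∈ S, a * b * a⁻¹ ∈ S

/-- The subrack of `G` generated by a subset `T`: the smallest subrack containing `T`. -/
def subrackClosure {G : Type*} [Group G] (T : Set G) : Set G :=
  ⋂₀ {S : Set G | IsSubrack S ∧ T ⊆ S}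

/-- The conjugacy class of `a` in `G`. -/
def conjClass {G : Type*} [Group G] (a : G) : Set G :=
  {x : G | ∃ g : G, g * a * g⁻¹ = x}

/-- `B_G(a, g) = ⟨{a, g}⟩_rk ∩ K_G(g)`. -/
def subrackB {G : Type*} [Group G] (a g : G) : Set G :=
  subrackClosure {a, g} ∩ conjClass g

/-- The relation `∼ₐ` whose equivalence classes form the hypothetical pseudo cycle
form of `a`: `g ∼ₐ h` iff `g` and `h` lie in exactly the same sets `B_G(a, y)`. -/
def pseudoRel {G : Type*} [Group G] (a : G) (g h : G) : Prop :=
  ∀ y : G, g ∈ subrackB a y ↔ h ∈ subrackB a y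

/-- The abelian set associated with `a`: elements `x` such that `∼ₓ` refines `∼ₐ`. -/
def assocAbelianSet {G : Type*} [Group G] (a : G) : Set G :=
  {x : G | ∀ g h : G, pseudoRel x g h → pseudoRel a g h}

/-- The relation `≈ₐ` whose equivalence classes form the hypothetical cycle form of `a`. -/
def cycleRel {G : Type*} [Group G] (a : G) (g h : G) : Prop :=
  pseudoRel a g h ∧
    ∀ x : G, x * a = a * x → (x * g * x⁻¹ = g ↔ x * h * x⁻¹ = h)

section Aux

variable {G : Type*} [Group G]

/-- Conjugation orbit of `g` under a subgroup `K`. -/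
def orbS (K : Subgroup G) (g : G) : Set G := {h : G | ∃ w ∈ K, w * g * w⁻¹ = h}

/-- Orbit of `g` under conjugation by the subgroup generated by `a` and `g`. -/
def orb (a g : G) : Set G := orbS (Subgroup.closure {a, g}) g

lemma mem_orbS_self {K : Subgroup G} (g : G) : g ∈ orbS K g :=
  ⟨1, K.one_mem, by group⟩

lemma orbS_conj {K : Subgroup G} {z t s : G} (ht : t ∈ orbS K z) (hs : s ∈ K) :
    s * t * s⁻¹ ∈ orbS K z := by
  obtain ⟨u, hu, rfl⟩ := ht
  exact ⟨s * u, mul_mem hs hu, by group⟩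

lemma a_mem_cl (a g : G) : a ∈ Subgroup.closure ({a, g} : Set G) :=
  Subgroup.subset_closure (Set.mem_insert _ _)

lemma g_mem_cl (a g : G) : g ∈ Subgroup.closure ({a, g} : Set G) :=
  Subgroup.subset_closure (Set.mem_insert_of_mem _ rfl)

lemma orb_mem_cl {a g h : G} (hh : h ∈ orb a g) :
    h ∈ Subgroup.closure ({a, g} : Set G) := by
  obtain ⟨w, hw, rfl⟩ := hh
  exact mul_mem (mul_mem hw (g_mem_cl a g)) (inv_mem hw)

lemma cl_le_of_orb {a g h : G} (hh : h ∈ orb a g) :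
    Subgroup.closure ({a, h} : Set G) ≤ Subgroup.closure ({a, g} : Set G) := by
  rw [Subgroup.closure_le]
  rintro s (rfl | rfl)
  · exact a_mem_cl s g
  · exact orb_mem_cl hh

lemma orb_trans {a g h : G} (hh : h ∈ orb a g) : orb a h ⊆ orb a g := by
  rintro t ⟨u, hu, rfl⟩
  have hu' : u ∈ Subgroup.closure ({a, g} : Set G) := cl_le_of_orb hh hu
  obtain ⟨w, hw, rfl⟩ := hh
  exact ⟨u * w, mul_mem hu' hw, by group⟩

lemma subset_subrackClosure {T : Set G} : T ⊆ subrackClosure T := fun t ht =>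
  Set.mem_sInter.2 fun _ hS => hS.2 ht

lemma isSubrack_subrackClosure {T : Set G} : IsSubrack (subrackClosure T) := by
  intro a ha b hb
  exact Set.mem_sInter.2 fun S hS =>
    hS.1 a (Set.mem_sInter.1 ha S hS) b (Set.mem_sInter.1 hb S hS)

lemma subrackClosure_subset {T S : Set G} (hS : IsSubrack S) (hTS : T ⊆ S) :
    subrackClosure T ⊆ S :=
  Set.sInter_subset_of_mem ⟨hS, hTS⟩

lemma mem_conjClass_self (g : G) : g ∈ conjClass g := ⟨1, by group⟩

lemma conjClass_conj {y t : G} (ht : t ∈ conjClass y) (w : G) :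
    w * t * w⁻¹ ∈ conjClass y := by
  obtain ⟨c, rfl⟩ := ht
  exact ⟨w * c, by group⟩

lemma conjClass_conj' {y t w : G} (ht : w * t * w⁻¹ ∈ conjClass y) : t ∈ conjClass y := by
  obtain ⟨c, hc⟩ := ht
  refine ⟨w⁻¹ * c, ?_⟩
  have h1 : w⁻¹ * c * y * (w⁻¹ * c)⁻¹ = w⁻¹ * (c * y * c⁻¹) * w := by group
  rw [h1, hc]
  group

/-- The subrack closure of `{x, y}` is contained in the union of the conjugation
orbits of `x` and `y` under `⟨x, y⟩`. -/
lemma subrack_subset_orbs (x y : G) :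
    subrackClosure ({x, y} : Set G) ⊆
      orbS (Subgroup.closure {x, y}) x ∪ orbS (Subgroup.closure {x, y}) y := by
  apply subrackClosure_subset
  · rintro s hs t ht
    have hsK : s ∈ Subgroup.closure ({x, y} : Set G) := by
      rcases hs with ⟨w, hw, rfl⟩ | ⟨w, hw, rfl⟩
      · exact mul_mem (mul_mem hw (a_mem_cl x y)) (inv_mem hw)
      · exact mul_mem (mul_mem hw (g_mem_cl x y)) (inv_mem hw)
    rcases ht with h | h
    · exact Or.inl (orbS_conj h hsK)
    · exact Or.inr (orbS_conj h hsK)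
  · rintro s (rfl | rfl)
    · exact Or.inl (mem_orbS_self s)
    · exact Or.inr (mem_orbS_self s)

variable [Finite G]

/-- The setwise stabilizer (under conjugation) of a subset of a finite group. -/
def stab (S : Set G) : Subgroup G where
  carrier := {x : G | ∀ t ∈ S, x * t * x⁻¹ ∈ S}
  one_mem' := by intro t ht; simpa using ht
  mul_mem' := by
    intro x y hx hy t ht
    have h2 := hx _ (hy t ht)
    have h3 : (x * y) * t * (x * y)⁻¹ = x * (y * t * y⁻¹) * x⁻¹ := by group
    rw [h3]; exact h2
  inv_mem' := by
    intro x hx t ht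
    have hinj : Function.Injective (fun u : S => (⟨x * u * x⁻¹, hx u u.2⟩ : S)) := by
      intro u v huv
      have h1 := congrArg Subtype.val huv
      exact Subtype.ext (mul_left_cancel (mul_right_cancel h1))
    obtain ⟨⟨s, hs⟩, hse⟩ := Finite.injective_iff_surjective.mp hinj ⟨t, ht⟩
    have h2 : x * s * x⁻¹ = t := congrArg Subtype.val hse
    have h3 : x⁻¹ * t * x⁻¹⁻¹ = s := by rw [← h2]; group
    rw [h3]; exact hs

lemma mem_stab {S : Set G} {x : G} : x ∈ stab S ↔ ∀ t ∈ S, x * t * x⁻¹ ∈ S := Iff.rfl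

/-- `g ∼ₓ x g x⁻¹` always. -/
lemma pseudoRel_conj (x g : G) : pseudoRel x g (x * g * x⁻¹) := by
  intro y
  have hxS : x ∈ subrackClosure ({x, y} : Set G) :=
    subset_subrackClosure (Set.mem_insert _ _)
  constructor
  · rintro ⟨h1, h2⟩
    exact ⟨isSubrack_subrackClosure x hxS g h1, conjClass_conj h2 x⟩
  · rintro ⟨h1, h2⟩
    have hx : x ∈ stab (subrackClosure ({x, y} : Set G)) :=
      mem_stab.2 fun t ht => isSubrack_subrackClosure x hxS t ht
    have h3 := mem_stab.1 ((stab (subrackClosure ({x, y} : Set G))).inv_mem hx) _ h1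
    have he : x⁻¹ * (x * g * x⁻¹) * x⁻¹⁻¹ = g := by group
    rw [he] at h3
    exact ⟨h3, conjClass_conj' h2⟩

/-- Key lemma, forward: `g ∼ₐ h` implies `h` lies in the conjugation orbit
of `g` under `⟨a, g⟩`. -/
lemma pseudoRel_mem_orb {a g h : G} (hp : pseudoRel a g h) : h ∈ orb a g := by
  have hg : g ∈ subrackB a g :=
    ⟨subset_subrackClosure (Set.mem_insert_of_mem _ rfl), mem_conjClass_self g⟩
  have hB : h ∈ subrackB a g := (hp g).mp hg
  rcases subrack_subset_orbs a g hB.1 with hcase | hcase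
  · -- h is a conjugate of a
    obtain ⟨u, hu, hue⟩ := hcase
    have hh : h ∈ subrackB a h :=
      ⟨subset_subrackClosure (Set.mem_insert_of_mem _ rfl), mem_conjClass_self h⟩
    have hB2 : g ∈ subrackB a h := (hp h).mpr hh
    have hHK : Subgroup.closure ({a, h} : Set G) ≤ Subgroup.closure ({a, g} : Set G) := by
      rw [Subgroup.closure_le]
      rintro s (rfl | rfl)
      · exact a_mem_cl s g
      · rw [SetLike.mem_coe, ← hue]
        exact mul_mem (mul_mem hu (a_mem_cl a g)) (inv_mem hu)
    rcases subrack_subset_orbs a h hB2.1 with hc2 | hc2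
    · obtain ⟨v, hv, hve⟩ := hc2
      refine ⟨u * v⁻¹, mul_mem hu (inv_mem (hHK hv)), ?_⟩
      have ha' : a = v⁻¹ * g * v := by rw [← hve]; group
      rw [← hue, ha']; group
    · obtain ⟨v, hv, hve⟩ := hc2
      refine ⟨v⁻¹, inv_mem (hHK hv), ?_⟩
      rw [← hve]; group
  · exact hcase

/-- Key lemma, backward: mutual orbit membership implies `g ∼ₐ h`. -/
lemma orbs_pseudoRel {a g h : G} (h1 : h ∈ orb a g) (h2 : g ∈ orb a h) :
    pseudoRel a g h := by
  intro y
  constructor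
  · rintro ⟨hS, hC⟩
    obtain ⟨u, hu, hue⟩ := h1
    have hle : Subgroup.closure ({a, g} : Set G) ≤ stab (subrackClosure ({a, y} : Set G)) := by
      rw [Subgroup.closure_le]
      rintro s (rfl | rfl) <;> rw [SetLike.mem_coe, mem_stab]
      · exact fun t ht =>
          isSubrack_subrackClosure _ (subset_subrackClosure (Set.mem_insert _ _)) t ht
      · exact fun t ht => isSubrack_subrackClosure _ hS t ht
    have h3 := mem_stab.1 (hle hu) g hS
    rw [hue] at h3
    refine ⟨h3, ?_⟩
    rw [← hue]
    exact conjClass_conj hC u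
  · rintro ⟨hS, hC⟩
    obtain ⟨v, hv, hve⟩ := h2
    have hle : Subgroup.closure ({a, h} : Set G) ≤ stab (subrackClosure ({a, y} : Set G)) := by
      rw [Subgroup.closure_le]
      rintro s (rfl | rfl) <;> rw [SetLike.mem_coe, mem_stab]
      · exact fun t ht =>
          isSubrack_subrackClosure _ (subset_subrackClosure (Set.mem_insert _ _)) t ht
      · exact fun t ht => isSubrack_subrackClosure _ hS t ht
    have h3 := mem_stab.1 (hle hv) h hS
    rw [hve] at h3
    refine ⟨h3, ?_⟩
    rw [← hve]
    exact conjClass_conj hC v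

/-- The subgroup `{x : ∀ g, x g x⁻¹ ∈ O(a,g)}`. -/
def Aprime (a : G) : Subgroup G where
  carrier := {x : G | ∀ g : G, x * g * x⁻¹ ∈ orb a g}
  one_mem' := by intro g; show 1 * g * 1⁻¹ ∈ orb a g; rw [one_mul, inv_one, mul_one]; exact mem_orbS_self g
  mul_mem' := by
    intro x y hx hy g
    have h1 : y * g * y⁻¹ ∈ orb a g := hy g
    have h2 : x * (y * g * y⁻¹) * x⁻¹ ∈ orb a g := orb_trans h1 (hx _)
    have h3 : (x * y) * g * (x * y)⁻¹ = x * (y * g * y⁻¹) * x⁻¹ := by group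
    rw [h3]; exact h2
  inv_mem' := by
    intro x hx g
    have hx' : x ∈ stab (orb a g) := mem_stab.2 fun t ht => orb_trans ht (hx t)
    exact mem_stab.1 ((stab (orb a g)).inv_mem hx') g (mem_orbS_self g)

lemma mem_Aprime {a x : G} : x ∈ Aprime a ↔ ∀ g : G, x * g * x⁻¹ ∈ orb a g := Iff.rfl

lemma a_mem_Aprime (a : G) : a ∈ Aprime a :=
  mem_Aprime.2 fun g => ⟨a, a_mem_cl a g, rfl⟩

/-- The main characterization: `A_G(a) = Aprime a`. -/
lemma assocAbelianSet_eq (a : G) : assocAbelianSet a = (Aprime a : Set G) := by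
  ext x
  constructor
  · intro hx
    rw [SetLike.mem_coe, mem_Aprime]
    intro g
    exact pseudoRel_mem_orb (hx _ _ (pseudoRel_conj x g))
  · intro hx
    rw [SetLike.mem_coe, mem_Aprime] at hx
    intro g h hgh
    have hh : h ∈ orb x g := pseudoRel_mem_orb hgh
    have hg : g ∈ orb x h := pseudoRel_mem_orb (fun y => (hgh y).symm)
    have key : ∀ p q : G, q ∈ orb x p → q ∈ orb a p := by
      intro p q hq
      have hle : Subgroup.closure ({x, p} : Set G) ≤ stab (orb a p) := by
        rw [Subgroup.closure_le]
        rintro s (rfl | rfl) <;> rw [SetLike.mem_coe, mem_stab]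
        · exact fun t ht => orb_trans ht (hx t)
        · exact fun t ht => orbS_conj ht (g_mem_cl a s)
      obtain ⟨w, hw, rfl⟩ := hq
      exact mem_stab.1 (hle hw) p (mem_orbS_self p)
    exact orbs_pseudoRel (key g h hh) (key h g hg)

lemma orb_comm_eq {a y : G} (hc : a * y = y * a) {t : G} (ht : t ∈ orb a y) : t = y := by
  obtain ⟨w, hw, rfl⟩ := ht
  have hle : Subgroup.closure ({a, y} : Set G) ≤ Subgroup.centralizer {y} := by
    rw [Subgroup.closure_le]
    rintro s (rfl | rfl) <;> rw [SetLike.mem_coe, Subgroup.mem_centralizer_iff] <;>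
      rintro z rfl
    · exact hc.symm
    · rfl
  have h1 : y * w = w * y := Subgroup.mem_centralizer_iff.mp (hle hw) y rfl
  rw [h1.symm]
  group

end Aux

theorem assocAbelianSet_properties
    {G : Type*} [Group G] [Finite G] (hZ : Subgroup.center G = ⊥) (a : G) :
    a ∈ assocAbelianSet a ∧
    (∀ x ∈ assocAbelianSet a, x ∈ Subgroup.centralizer ({a} : Set G) ∧
      ∀ y ∈ Subgroup.centralizer ({a} : Set G), x * y = y * x) ∧
    orderOf a ∣ Nat.card (assocAbelianSet a) := by
  refine ⟨fun _ _ h => h, ?_, ?_⟩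
  · intro x hx
    rw [assocAbelianSet_eq a, SetLike.mem_coe, mem_Aprime] at hx
    have hcomm : ∀ y : G, a * y = y * a → x * y = y * x := by
      intro y hy
      have he : x * y * x⁻¹ = y := orb_comm_eq hy (hx y)
      calc x * y = (x * y * x⁻¹) * x := by group
        _ = y * x := by rw [he]
    constructor
    · refine Subgroup.mem_centralizer_iff.2 ?_
      rintro g rfl
      exact (hcomm g rfl).symm
    · intro y hy
      exact hcomm y (Subgroup.mem_centralizer_iff.mp hy a rfl)
  · have he : assocAbelianSet a = ((Aprime a : Subgroup G) : Set G) := assocAbelianSet_eq a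
    have hle : Subgroup.zpowers a ≤ Aprime a := Subgroup.zpowers_le.mpr (a_mem_Aprime a)
    have hdvd := Subgroup.card_dvd_of_le hle
    rw [Nat.card_zpowers] at hdvd
    rw [he, SetLike.coe_sort_coe]
    exact hdvd
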